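/- arXiv:2309.02865 — 3 statements merged into one kernel-verified Lean document; each statement's English description precedes it below -/
import Mathlib

section
/- Let n ≤ m, A ∈ Mat_{n×m}(ℚ_p) nonsingular with singular numbers λ_1 ≥ ... ≥ λ_n. Then for any 1 ≤ k ≤ n, the sum λ_n + λ_{n-1} + ... + λ_{n-k+1} equals the infimum over all k × k minors A' of A of val_p(det A'), where a k × k minor is any k × k submatrix obtained by selecting k rows and k columns of A. -/
open Matrix

noncomputable def pDiag (p : ℕ) [Fact p.Prime] (n m : ℕ) (lam : Fin n → ℤ) :
    Matrix (Fin n) (Fin m) ℚ_[p] :=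
  Matrix.of fun i j => if (i : ℕ) = (j : ℕ) then (p : ℚ_[p]) ^ (lam i) else 0

noncomputable def intMap {p : ℕ} [Fact p.Prime] {n m : ℕ}
    (M : Matrix (Fin n) (Fin m) ℤ_[p]) : Matrix (Fin n) (Fin m) ℚ_[p] :=
  M.map (fun x => (x : ℚ_[p]))

/-- `lam` is the tuple of singular numbers of `A`. -/
def IsSNF (p : ℕ) [Fact p.Prime] {n m : ℕ} (A : Matrix (Fin n) (Fin m) ℚ_[p])
    (lam : Fin n → ℤ) : Prop :=
  Antitone lam ∧ ∃ (U : Matrix (Fin n) (Fin n) ℤ_[p]) (V : Matrix (Fin m) (Fin m) ℤ_[p]),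
    IsUnit U ∧ IsUnit V ∧ A = intMap U * pDiag p n m lam * intMap V

open Classical in
/-- p-adic valuation, with `val_p 0 = ⊤`. -/
noncomputable def pval {p : ℕ} [Fact p.Prime] (x : ℚ_[p]) : WithTop ℤ :=
  if x = 0 then ⊤ else (x.valuation : WithTop ℤ)

/-- Infimum of `val_p (det A')` over all `k × k` minors `A'` of `A`. -/
noncomputable def minorInf {p : ℕ} [Fact p.Prime] {n m : ℕ}
    (A : Matrix (Fin n) (Fin m) ℚ_[p]) (k : ℕ) : WithTop ℤ :=
  ⨅ (r : Fin k ↪ Fin n) (c : Fin k ↪ Fin m), pval ((A.submatrix r c).det)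

namespace SNF
variable {p : ℕ} [Fact p.Prime]

lemma pval_def (x : ℚ_[p]) : pval x = Padic.addValuationDef x := rfl

lemma pval_zero : pval (0 : ℚ_[p]) = ⊤ := by simp [pval]

lemma pval_one : pval (1 : ℚ_[p]) = 0 := Padic.AddValuation.map_one

lemma pval_mul (x y : ℚ_[p]) : pval (x * y) = pval x + pval y :=
  Padic.AddValuation.map_mul x y

lemma pval_min_le_add (x y : ℚ_[p]) : min (pval x) (pval y) ≤ pval (x + y) :=
  Padic.AddValuation.map_add x y

lemma pval_sum {ι : Type*} (s : Finset ι) (g : ι → ℚ_[p]) (B : WithTop ℤ)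
    (h : ∀ i ∈ s, B ≤ pval (g i)) : B ≤ pval (∑ i ∈ s, g i) := by
  classical
  induction s using Finset.cons_induction with
  | empty => simp [pval_zero]
  | cons a s ha ih =>
    rw [Finset.sum_cons]
    refine le_trans (le_min (h a (Finset.mem_cons_self a s))
      (ih fun i hi => h i (Finset.mem_cons_of_mem hi))) (pval_min_le_add _ _)

lemma pval_prod {ι : Type*} (s : Finset ι) (g : ι → ℚ_[p]) :
    pval (∏ i ∈ s, g i) = ∑ i ∈ s, pval (g i) := by
  classical
  induction s using Finset.cons_induction with
  | empty => simp [pval_one]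
  | cons a s ha ih => rw [Finset.prod_cons, Finset.sum_cons, pval_mul, ih]

lemma pval_coe_nonneg (c : ℤ_[p]) : 0 ≤ pval (c : ℚ_[p]) := by
  by_cases hc : c = 0
  · simp [hc, pval_zero]
  · have hc' : (c : ℚ_[p]) ≠ 0 := PadicInt.coe_ne_zero.mpr hc
    rw [pval, if_neg hc']
    exact_mod_cast PadicInt.valuation_coe_nonneg (x := c)

lemma pval_neg_one : pval (-1 : ℚ_[p]) = 0 := by
  have h : ((-1 : ℤ) : ℚ_[p]) = -1 := by push_cast; ring
  rw [pval, if_neg (by norm_num), ← h, Padic.valuation_intCast]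
  simp [padicValInt]

lemma pval_neg (x : ℚ_[p]) : pval (-x) = pval x := by
  rw [neg_eq_neg_one_mul, pval_mul, pval_neg_one, zero_add]

lemma p_ne_zero : (p : ℚ_[p]) ≠ 0 :=
  Nat.cast_ne_zero.mpr (Fact.out (p := p.Prime)).ne_zero

lemma val_p_zpow (z : ℤ) : ((p : ℚ_[p]) ^ z).valuation = z := by
  have pne : (p : ℚ_[p]) ≠ 0 := p_ne_zero
  induction z using Int.induction_on with
  | zero => simp [Padic.valuation_one]
  | succ n ih =>
    have h := Padic.valuation_mul (x := (p : ℚ_[p]) ^ (n : ℤ)) (y := (p : ℚ_[p]))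
      (zpow_ne_zero _ pne) pne
    rw [← zpow_add_one₀ pne] at h
    rw [h, ih, Padic.valuation_p]
  | pred n ih =>
    have hinv : ((p : ℚ_[p])⁻¹).valuation = -1 := by
      have h0 := Padic.valuation_mul (x := (p : ℚ_[p])) (y := (p : ℚ_[p])⁻¹)
        pne (inv_ne_zero pne)
      rw [mul_inv_cancel₀ pne, Padic.valuation_one, Padic.valuation_p] at h0
      linarith
    have h := Padic.valuation_mul (x := (p : ℚ_[p]) ^ (-(n : ℤ))) (y := (p : ℚ_[p])⁻¹)
      (zpow_ne_zero _ pne) (inv_ne_zero pne)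
    rw [← zpow_sub_one₀ pne] at h
    rw [h, ih, hinv]
    ring

lemma pval_p_zpow (z : ℤ) : pval ((p : ℚ_[p]) ^ z) = (z : WithTop ℤ) := by
  rw [pval, if_neg (zpow_ne_zero _ p_ne_zero), val_p_zpow]

end SNF

namespace SNF
variable {p : ℕ} [Fact p.Prime]

lemma minorInf_le {n m k : ℕ} (A : Matrix (Fin n) (Fin m) ℚ_[p])
    (r : Fin k ↪ Fin n) (c : Fin k ↪ Fin m) :
    minorInf A k ≤ pval ((A.submatrix r c).det) := by
  refine le_trans (ciInf_le (Set.finite_range _).bddBelow r) ?_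
  exact ciInf_le (Set.finite_range _).bddBelow c

lemma le_minorInf {n m k : ℕ} [Nonempty (Fin k ↪ Fin n)] [Nonempty (Fin k ↪ Fin m)]
    (A : Matrix (Fin n) (Fin m) ℚ_[p]) (B : WithTop ℤ)
    (h : ∀ (r : Fin k ↪ Fin n) (c : Fin k ↪ Fin m), B ≤ pval ((A.submatrix r c).det)) :
    B ≤ minorInf A k :=
  le_ciInf fun r => le_ciInf fun c => h r c

lemma le_minorInf_mul_left {n m k : ℕ} [Nonempty (Fin k ↪ Fin n)] [Nonempty (Fin k ↪ Fin m)]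
    (U : Matrix (Fin n) (Fin n) ℤ_[p]) (X : Matrix (Fin n) (Fin m) ℚ_[p]) :
    minorInf X k ≤ minorInf (intMap U * X) k := by
  classical
  refine le_minorInf _ _ fun r c => ?_
  have hdet : ((intMap U * X).submatrix r c).det
      = ∑ t : Fin k → Fin n, (∏ i, (U (r i) (t i) : ℚ_[p])) • (X.submatrix t c).det := by
    have h1 : ∀ i, ((intMap U * X).submatrix r c) i
        = ∑ t : Fin n, (U (r i) t : ℚ_[p]) • (fun j => X t (c j)) := by
      intro i; funext j
      simp [Matrix.mul_apply, intMap, Finset.sum_apply, Matrix.map_apply, smul_eq_mul]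
    calc ((intMap U * X).submatrix r c).det
        = Matrix.detRowAlternating
            (Matrix.of fun i => ∑ t : Fin n, (U (r i) t : ℚ_[p]) • (fun j => X t (c j))) := by
          unfold Matrix.det; congr 1; funext i; exact h1 i
      _ = ∑ t : Fin k → Fin n, Matrix.detRowAlternating
            (Matrix.of fun i => (U (r i) (t i) : ℚ_[p]) • (fun j => X (t i) (c j))) :=
          (Matrix.detRowAlternating).toMultilinearMap.map_sum
            (g := fun i t => (U (r i) t : ℚ_[p]) • (fun j => X t (c j)))
      _ = ∑ t : Fin k → Fin n, (∏ i, (U (r i) (t i) : ℚ_[p])) • (X.submatrix t c).det := by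
          refine Finset.sum_congr rfl fun t _ => ?_
          exact (Matrix.detRowAlternating).toMultilinearMap.map_smul_univ
            (fun i => (U (r i) (t i) : ℚ_[p])) (fun i j => X (t i) (c j))
  rw [hdet]
  refine pval_sum _ _ _ fun t _ => ?_
  by_cases ht : Function.Injective t
  · rw [smul_eq_mul, pval_mul]
    have hcoeff : 0 ≤ pval (∏ i, (U (r i) (t i) : ℚ_[p])) := by
      have : (∏ i, (U (r i) (t i) : ℚ_[p])) = ((∏ i, U (r i) (t i) : ℤ_[p]) : ℚ_[p]) := by
        exact (map_prod (PadicInt.Coe.ringHom) (fun i => U (r i) (t i)) Finset.univ).symm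
      rw [this]; exact pval_coe_nonneg _
    have hle : minorInf X k ≤ pval ((X.submatrix t c).det) := by
      have := minorInf_le X ⟨t, ht⟩ c
      simpa using this
    calc minorInf X k ≤ pval ((X.submatrix t c).det) := hle
      _ = 0 + pval ((X.submatrix t c).det) := (zero_add _).symm
      _ ≤ _ := add_le_add_left hcoeff _
  · obtain ⟨a, b, hab, hne⟩ := Function.not_injective_iff.mp ht
    have hz : (X.submatrix t c).det = 0 := by
      refine Matrix.det_zero_of_row_eq hne ?_
      funext j; simp [Matrix.submatrix_apply, hab]
    rw [hz, smul_zero, pval_zero]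
    exact le_top

end SNF

namespace SNF
variable {p : ℕ} [Fact p.Prime]

lemma minorInf_transpose {n m k : ℕ} [Nonempty (Fin k ↪ Fin n)] [Nonempty (Fin k ↪ Fin m)]
    (A : Matrix (Fin n) (Fin m) ℚ_[p]) : minorInf Aᵀ k = minorInf A k := by
  apply le_antisymm
  · refine le_minorInf _ _ fun r c => ?_
    have h : ((A.submatrix r c).det) = ((Aᵀ.submatrix c r).det) := by
      rw [← Matrix.det_transpose (A.submatrix r c), Matrix.transpose_submatrix]
    rw [h]
    exact minorInf_le _ _ _
  · refine le_minorInf _ _ fun c r => ?_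
    have h : ((Aᵀ.submatrix c r).det) = ((A.submatrix r c).det) := by
      rw [← Matrix.transpose_submatrix, Matrix.det_transpose]
    rw [h]
    exact minorInf_le _ _ _

lemma intMap_mul {n' : ℕ} (M N : Matrix (Fin n') (Fin n') ℤ_[p]) :
    intMap (M * N) = intMap M * intMap N := by
  have : (fun x : ℤ_[p] => (x : ℚ_[p])) = (PadicInt.Coe.ringHom : ℤ_[p] →+* ℚ_[p]) := rfl
  simp only [intMap, this, Matrix.map_mul]

lemma intMap_one {n' : ℕ} : intMap (1 : Matrix (Fin n') (Fin n') ℤ_[p]) = 1 :=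
  Matrix.map_one _ (by simp) (by simp)

lemma minorInf_unit_left {n m k : ℕ} [Nonempty (Fin k ↪ Fin n)] [Nonempty (Fin k ↪ Fin m)]
    {U : Matrix (Fin n) (Fin n) ℤ_[p]} (hU : IsUnit U) (X : Matrix (Fin n) (Fin m) ℚ_[p]) :
    minorInf (intMap U * X) k = minorInf X k := by
  obtain ⟨u, rfl⟩ := hU
  refine le_antisymm ?_ (le_minorInf_mul_left _ _)
  have hX : X = intMap ((u⁻¹ : (Matrix (Fin n) (Fin n) ℤ_[p])ˣ) : Matrix (Fin n) (Fin n) ℤ_[p])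
      * (intMap (u : Matrix (Fin n) (Fin n) ℤ_[p]) * X) := by
    rw [← Matrix.mul_assoc, ← intMap_mul, u.inv_mul, intMap_one, Matrix.one_mul]
  calc minorInf (intMap (u : Matrix (Fin n) (Fin n) ℤ_[p]) * X) k
      ≤ minorInf (intMap ((u⁻¹ : (Matrix (Fin n) (Fin n) ℤ_[p])ˣ) : Matrix (Fin n) (Fin n) ℤ_[p])
          * (intMap (u : Matrix (Fin n) (Fin n) ℤ_[p]) * X)) k := le_minorInf_mul_left _ _
    _ = minorInf X k := by rw [← hX]

lemma intMap_transpose {a b : ℕ} (M : Matrix (Fin a) (Fin b) ℤ_[p]) :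
    (intMap M)ᵀ = intMap Mᵀ := by
  simp [intMap, Matrix.transpose_map]

lemma minorInf_unit_right {n m k : ℕ} [Nonempty (Fin k ↪ Fin n)] [Nonempty (Fin k ↪ Fin m)]
    {V : Matrix (Fin m) (Fin m) ℤ_[p]} (hV : IsUnit V) (X : Matrix (Fin n) (Fin m) ℚ_[p]) :
    minorInf (X * intMap V) k = minorInf X k := by
  have hVt : IsUnit Vᵀ := by
    rw [Matrix.isUnit_iff_isUnit_det, Matrix.det_transpose, ← Matrix.isUnit_iff_isUnit_det]
    exact hV
  calc minorInf (X * intMap V) k = minorInf (X * intMap V)ᵀ k := (minorInf_transpose _).symm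
    _ = minorInf (intMap Vᵀ * Xᵀ) k := by rw [Matrix.transpose_mul, intMap_transpose]
    _ = minorInf Xᵀ k := minorInf_unit_left hVt _
    _ = minorInf X k := minorInf_transpose _

end SNF

namespace SNF
variable {p : ℕ} [Fact p.Prime]

lemma strictMono_le_val {k n : ℕ} {g : Fin k → Fin n} (hg : StrictMono g) :
    ∀ i : Fin k, (i : ℕ) ≤ (g i : ℕ) := by
  intro ⟨j, hj⟩
  induction j with
  | zero => exact Nat.zero_le _
  | succ j ih =>
    have hj' : j < k := Nat.lt_of_succ_lt hj
    have h2 : g ⟨j, hj'⟩ < g ⟨j + 1, hj⟩ := hg (by simp [Fin.lt_def])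
    exact Nat.succ_le_of_lt (lt_of_le_of_lt (ih hj') h2)

lemma strictMono_val_ub {k n : ℕ} {g : Fin k → Fin n} (hg : StrictMono g) (i : Fin k) :
    (g i : ℕ) ≤ n - k + (i : ℕ) := by
  have hg' : StrictMono (fun j : Fin k => (g j.rev).rev) := by
    intro a b hab
    have h1 : b.rev < a.rev := Fin.rev_lt_rev.mpr hab
    exact Fin.rev_lt_rev.mpr (hg h1)
  have h := strictMono_le_val hg' i.rev
  simp only [Fin.rev_rev, Fin.val_rev] at h
  have h1 : (g i : ℕ) < n := (g i).isLt
  have h2 : (i : ℕ) < k := i.isLt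
  omega

lemma sum_antitone_min {n k : ℕ} (hkn : k ≤ n) (lam : Fin n → ℤ) (hmono : Antitone lam)
    (t : Fin k → Fin n) (ht : Function.Injective t) :
    ∑ j : Fin k, lam ⟨n - k + (j : ℕ), by omega⟩ ≤ ∑ j : Fin k, lam (t j) := by
  classical
  set T : Finset (Fin n) := Finset.image t Finset.univ with hT
  have hcard : T.card = k := by
    rw [hT, Finset.card_image_of_injective _ ht, Finset.card_univ, Fintype.card_fin]
  set g : Fin k ↪o Fin n := T.orderEmbOfFin hcard with hg
  have himg : Finset.image (fun j => g j) Finset.univ = T := by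
    apply Finset.coe_injective
    rw [Finset.coe_image, Finset.coe_univ, Set.image_univ]
    exact Finset.range_orderEmbOfFin T hcard
  have hsum1 : ∑ j : Fin k, lam (t j) = ∑ x ∈ T, lam x := by
    rw [hT, Finset.sum_image (fun a _ b _ h => ht h)]
  have hsum2 : ∑ x ∈ T, lam x = ∑ j : Fin k, lam (g j) := by
    rw [← himg, Finset.sum_image (fun a _ b _ h => g.injective h)]
  rw [hsum1, hsum2]
  apply Finset.sum_le_sum
  intro j _
  apply hmono
  rw [Fin.le_def]
  exact strictMono_val_ub g.strictMono j

end SNF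

namespace SNF
variable {p : ℕ} [Fact p.Prime]

lemma minorInf_pDiag {n m k : ℕ} (hkn : k ≤ n) (hnm : n ≤ m)
    (lam : Fin n → ℤ) (hmono : Antitone lam) :
    minorInf (pDiag p n m lam) k
      = ((∑ j : Fin k, lam ⟨n - k + (j : ℕ), by omega⟩ : ℤ) : WithTop ℤ) := by
  classical
  have hkm : k ≤ m := hkn.trans hnm
  haveI : Nonempty (Fin k ↪ Fin n) := ⟨Fin.castLEEmb hkn⟩
  haveI : Nonempty (Fin k ↪ Fin m) := ⟨Fin.castLEEmb hkm⟩
  apply le_antisymm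
  · set r0 : Fin k ↪ Fin n :=
      ⟨fun j => ⟨n - k + (j : ℕ), by omega⟩, by
        intro a b h
        have h2 := congrArg Fin.val h
        simp only at h2
        exact Fin.ext (by omega)⟩ with hr0
    set c0 : Fin k ↪ Fin m :=
      ⟨fun j => ⟨n - k + (j : ℕ), by omega⟩, by
        intro a b h
        have h2 := congrArg Fin.val h
        simp only at h2
        exact Fin.ext (by omega)⟩ with hc0
    have hsub : (pDiag p n m lam).submatrix r0 c0
        = Matrix.diagonal (fun j : Fin k => (p : ℚ_[p]) ^ (lam ⟨n - k + (j : ℕ), by omega⟩)) := by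
      ext i j
      simp only [Matrix.submatrix_apply, pDiag, Matrix.of_apply, Matrix.diagonal_apply, hr0, hc0,
        Function.Embedding.coeFn_mk]
      by_cases h : i = j
      · subst h; rw [if_pos rfl]; exact if_pos rfl
      · rw [if_neg, if_neg h]
        intro hc
        exact h (Fin.ext (by have hc' : n - k + (i : ℕ) = n - k + (j : ℕ) := hc; omega))
    refine le_trans (minorInf_le _ r0 c0) ?_
    rw [hsub, Matrix.det_diagonal, pval_prod]
    rw [WithTop.coe_sum]
    apply le_of_eq
    refine Finset.sum_congr rfl fun j _ => ?_
    rw [pval_p_zpow]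
  · refine le_minorInf _ _ fun r c => ?_
    rw [Matrix.det_apply]
    refine pval_sum _ _ _ fun σ _ => ?_
    have key : ((∑ j : Fin k, lam ⟨n - k + (j : ℕ), by omega⟩ : ℤ) : WithTop ℤ)
        ≤ pval (∏ i : Fin k, (pDiag p n m lam).submatrix r c (σ i) i) := by
      by_cases hP : (∏ i : Fin k, (pDiag p n m lam).submatrix r c (σ i) i) = 0
      · rw [hP, pval_zero]; exact le_top
      · have hfac := Finset.prod_ne_zero_iff.mp hP
        have hPe : (∏ i : Fin k, (pDiag p n m lam).submatrix r c (σ i) i)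
            = ∏ i : Fin k, (p : ℚ_[p]) ^ (lam (r (σ i))) := by
          refine Finset.prod_congr rfl fun i _ => ?_
          have hne := hfac i (Finset.mem_univ i)
          simp only [Matrix.submatrix_apply, pDiag, Matrix.of_apply] at hne ⊢
          by_cases hcond : ((r (σ i) : ℕ) = ((c i : ℕ)))
          · rw [if_pos hcond]
          · rw [if_neg hcond] at hne; exact absurd rfl hne
        rw [hPe, pval_prod]
        have : ∑ i : Fin k, pval ((p : ℚ_[p]) ^ (lam (r (σ i))))
            = ((∑ i : Fin k, lam (r (σ i)) : ℤ) : WithTop ℤ) := by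
          rw [WithTop.coe_sum]
          exact Finset.sum_congr rfl fun i _ => pval_p_zpow _
        rw [this]
        rw [WithTop.coe_le_coe]
        exact sum_antitone_min hkn lam hmono (fun i => r (σ i))
          (r.injective.comp σ.injective)
    rcases Int.units_eq_one_or (Equiv.Perm.sign σ) with h | h <;> rw [h]
    · simpa using key
    · have : ((-1 : ℤˣ) • ∏ i : Fin k, (pDiag p n m lam).submatrix r c (σ i) i)
          = -(∏ i : Fin k, (pDiag p n m lam).submatrix r c (σ i) i) := by
        simp [Units.smul_def]
      rw [this, pval_neg]
      exact key

end SNF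

/-- The sum of the `k` smallest singular numbers equals the minimal valuation of a
`k × k` minor determinant. -/
theorem sn_sum_eq_minorInf (p n m k : ℕ) [Fact p.Prime] (hnm : n ≤ m)
    (A : Matrix (Fin n) (Fin m) ℚ_[p]) (hA : A.rank = n)
    (lam : Fin n → ℤ) (hlam : IsSNF p A lam) (hk1 : 1 ≤ k) (hkn : k ≤ n) :
    ((∑ i ∈ Finset.univ.filter (fun i : Fin n => n - k ≤ (i : ℕ)), lam i : ℤ) : WithTop ℤ)
      = minorInf A k := by
  obtain ⟨hmono, U, V, hU, hV, hAeq⟩ := hlam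
  have hkm : k ≤ m := hkn.trans hnm
  haveI : Nonempty (Fin k ↪ Fin n) := ⟨Fin.castLEEmb hkn⟩
  haveI : Nonempty (Fin k ↪ Fin m) := ⟨Fin.castLEEmb hkm⟩
  have hsum : (∑ i ∈ Finset.univ.filter (fun i : Fin n => n - k ≤ (i : ℕ)), lam i)
      = ∑ j : Fin k, lam ⟨n - k + (j : ℕ), by omega⟩ := by
    have himg : Finset.univ.filter (fun i : Fin n => n - k ≤ (i : ℕ))
        = Finset.image (fun j : Fin k => (⟨n - k + (j : ℕ), by omega⟩ : Fin n)) Finset.univ := by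
      ext x
      simp only [Finset.mem_filter, Finset.mem_univ, true_and, Finset.mem_image]
      constructor
      · intro hx
        refine ⟨⟨(x : ℕ) - (n - k), by omega⟩, Fin.ext ?_⟩
        simp only
        omega
      · rintro ⟨j, rfl⟩
        simp only
        omega
    rw [himg, Finset.sum_image (fun a _ b _ h => by
      have h2 := congrArg Fin.val h
      simp only at h2
      exact Fin.ext (by omega))]
  subst hAeq
  rw [hsum, SNF.minorInf_unit_right hV, SNF.minorInf_unit_left hU,
    SNF.minorInf_pDiag hkn hnm lam hmono]
end

section
/- Let n ≤ m, A ∈ Mat_{n×m}(ℚ_p) nonsingular, and B ∈ Mat_m(ℚ_p) invertible with all singular numbers nonnegative (equivalently, B has entries in ℤ_p). Then for each 1 ≤ i ≤ n, the i-th singular number of AB is at least the i-th singular number of A. Similarly, if C ∈ Mat_n(ℚ_p) is invertible with all singular numbers nonnegative, then SN(CA)_i ≥ SN(A)_i for each i. -/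
open Matrix

section Aux
variable {p : ℕ} [hp : Fact p.Prime]

lemma intMap_mul {n m k : ℕ} (M : Matrix (Fin n) (Fin m) ℤ_[p])
    (N : Matrix (Fin m) (Fin k) ℤ_[p]) : intMap (M * N) = intMap M * intMap N := by
  have : (fun x : ℤ_[p] => (x : ℚ_[p])) = ⇑(PadicInt.Coe.ringHom (p := p)) := rfl
  simp only [intMap, this]
  exact Matrix.map_mul

lemma intMap_one {n : ℕ} : intMap (1 : Matrix (Fin n) (Fin n) ℤ_[p]) = 1 := by
  simp only [intMap]
  apply Matrix.map_one <;> simp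

lemma det_block_zero {R : Type*} [CommRing R] {k : ℕ} (M : Matrix (Fin k) (Fin k) R)
    (S T : Finset (Fin k)) (hcard : k < S.card + T.card)
    (hz : ∀ r ∈ S, ∀ c ∈ T, M r c = 0) : M.det = 0 := by
  rw [Matrix.det_apply]
  apply Finset.sum_eq_zero
  intro σ _
  obtain ⟨c, hc, hsc⟩ : ∃ c ∈ T, σ c ∈ S := by
    by_contra h
    push_neg at h
    have hdisj : Disjoint S (T.image σ) := by
      rw [Finset.disjoint_right]
      rintro a ha
      simp only [Finset.mem_image] at ha
      obtain ⟨c, hc, rfl⟩ := ha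
      exact h c hc
    have h1 : (S ∪ T.image σ).card ≤ k := by
      simpa using Finset.card_le_card (Finset.subset_univ (S ∪ T.image σ))
    rw [Finset.card_union_of_disjoint hdisj,
      Finset.card_image_of_injective _ σ.injective] at h1
    omega
  have : ∏ i, M (σ i) i = 0 :=
    Finset.prod_eq_zero (Finset.mem_univ c) (hz _ hsc _ hc)
  simp [this]

lemma not_unit_block {k : ℕ} (G : Matrix (Fin k) (Fin k) ℤ_[p]) (hG : IsUnit G)
    (S T : Finset (Fin k)) (hcard : k < S.card + T.card)
    (hz : ∀ r ∈ S, ∀ c ∈ T, (p : ℤ_[p]) ∣ G r c) : False := by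
  have hdet : IsUnit G.det := (Matrix.isUnit_iff_isUnit_det G).mp hG
  have h1 : IsUnit ((PadicInt.toZMod : ℤ_[p] →+* ZMod p) G.det) := hdet.map _
  have h2 : (G.map (PadicInt.toZMod : ℤ_[p] →+* ZMod p)).det = 0 := by
    apply det_block_zero _ S T hcard
    intro r hr c hc
    have hmem : G r c ∈ RingHom.ker (PadicInt.toZMod : ℤ_[p] →+* ZMod p) := by
      rw [PadicInt.ker_toZMod, PadicInt.maximalIdeal_eq_span_p, Ideal.mem_span_singleton]
      exact hz r hr c hc
    simpa [Matrix.map_apply] using hmem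
  rw [show G.map (PadicInt.toZMod : ℤ_[p] →+* ZMod p)
      = (PadicInt.toZMod : ℤ_[p] →+* ZMod p).mapMatrix G from rfl,
    ← RingHom.map_det] at h2
  exact h1.ne_zero h2

lemma dvd_of_coe_eq {x y : ℤ_[p]} {d : ℤ} (hd : 1 ≤ d)
    (h : (x : ℚ_[p]) = (p : ℚ_[p]) ^ d * (y : ℚ_[p])) : (p : ℤ_[p]) ∣ x := by
  have hdn : (p : ℚ_[p]) ^ d = (((p : ℤ_[p]) ^ d.toNat : ℤ_[p]) : ℚ_[p]) := by
    push_cast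
    rw [← zpow_natCast, Int.toNat_of_nonneg (by omega)]
  rw [hdn, ← PadicInt.coe_mul] at h
  have hx : x = (p : ℤ_[p]) ^ d.toNat * y := Subtype.coe_injective h
  rw [hx]
  exact Dvd.dvd.mul_right (dvd_pow_self _ (by omega)) y

variable {n m : ℕ} (hnm : n ≤ m)

lemma entry1 (G : Matrix (Fin n) (Fin n) ℤ_[p]) (mu : Fin n → ℤ) (a b : Fin n) :
    (intMap G * pDiag p n m mu) a (Fin.castLE hnm b)
      = (G a b : ℚ_[p]) * (p : ℚ_[p]) ^ (mu b) := by
  simp only [Matrix.mul_apply, intMap, pDiag, Matrix.map_apply, Matrix.of_apply,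
    Fin.coe_castLE]
  rw [Finset.sum_eq_single b]
  · simp
  · intro k _ hk
    rw [if_neg (by simpa [Fin.val_eq_val] using hk), mul_zero]
  · simp

lemma entry2 (lam : Fin n → ℤ) (F : Matrix (Fin m) (Fin m) ℤ_[p]) (a : Fin n) (j : Fin m) :
    (pDiag p n m lam * intMap F) a j
      = (p : ℚ_[p]) ^ (lam a) * (F (Fin.castLE hnm a) j : ℚ_[p]) := by
  simp only [Matrix.mul_apply, intMap, pDiag, Matrix.map_apply, Matrix.of_apply]
  rw [Finset.sum_eq_single (Fin.castLE hnm a)]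
  · simp
  · intro k _ hk
    have : ¬ ((a:ℕ) = (k:ℕ)) := fun h => hk (by simp [Fin.ext_iff, ← h])
    rw [if_neg this, zero_mul]
  · simp

lemma entry3 (K : Matrix (Fin n) (Fin n) ℤ_[p]) (lam : Fin n → ℤ) (a : Fin n)
    (j : Fin m) (hj : n ≤ (j : ℕ)) : (intMap K * pDiag p n m lam) a j = 0 := by
  simp only [Matrix.mul_apply, intMap, pDiag, Matrix.map_apply, Matrix.of_apply]
  apply Finset.sum_eq_zero
  intro k _
  rw [if_neg (by omega), mul_zero]

lemma pDiag_eq_intMap (k l : ℕ) (beta : Fin k → ℤ) (hb : ∀ i, 0 ≤ beta i) :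
    pDiag p k l beta = intMap (Matrix.of fun i j =>
      if (i : ℕ) = (j : ℕ) then (p : ℤ_[p]) ^ ((beta i).toNat) else 0) := by
  ext i j
  simp only [pDiag, intMap, Matrix.map_apply, Matrix.of_apply]
  split
  · push_cast
    rw [← zpow_natCast, Int.toNat_of_nonneg (hb i)]
  · simp

end Aux

/-- Multiplying by a square matrix with nonnegative singular numbers weakly
increases each singular number. -/
theorem sn_mono_mul (p n m : ℕ) [Fact p.Prime] (hnm : n ≤ m)
    (A : Matrix (Fin n) (Fin m) ℚ_[p]) (hA : A.rank = n)
    (lam : Fin n → ℤ) (hlam : IsSNF p A lam) :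
    (∀ (B : Matrix (Fin m) (Fin m) ℚ_[p]) (beta : Fin m → ℤ),
      IsSNF p B beta → (∀ i, 0 ≤ beta i) →
      ∀ mu : Fin n → ℤ, IsSNF p (A * B) mu → ∀ i, lam i ≤ mu i) ∧
    (∀ (C : Matrix (Fin n) (Fin n) ℚ_[p]) (gamma : Fin n → ℤ),
      IsSNF p C gamma → (∀ i, 0 ≤ gamma i) →
      ∀ mu : Fin n → ℤ, IsSNF p (C * A) mu → ∀ i, lam i ≤ mu i) := by
  have hpne : (p : ℚ_[p]) ≠ 0 := Nat.cast_ne_zero.mpr (Fact.out (p := p.Prime)).pos.ne'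
  obtain ⟨hlam_mono, U₁, V₁, hU₁, hV₁, hAeq⟩ := hlam
  constructor
  · -- right multiplication
    intro B beta hB hbpos mu hmu i
    by_contra hlt
    push_neg at hlt
    obtain ⟨hmu_mono, U₂, V₂, hU₂, hV₂, hABeq⟩ := hmu
    obtain ⟨_, W, X, hW, hX, hBeq⟩ := hB
    set D : Matrix (Fin m) (Fin m) ℤ_[p] := Matrix.of (fun i j =>
      if (i : ℕ) = (j : ℕ) then (p : ℤ_[p]) ^ ((beta i).toNat) else 0) with hD
    set B' : Matrix (Fin m) (Fin m) ℤ_[p] := W * D * X with hB'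
    have hBint : B = intMap B' := by
      rw [hB', hD, intMap_mul, intMap_mul, ← pDiag_eq_intMap m m beta hbpos, hBeq]
    set u₁ := hU₁.unit with hu₁
    set v₂ := hV₂.unit with hv₂
    set G : Matrix (Fin n) (Fin n) ℤ_[p] := (↑u₁⁻¹ : Matrix _ _ ℤ_[p]) * U₂ with hGdef
    set F : Matrix (Fin m) (Fin m) ℤ_[p] := V₁ * B' * (↑v₂⁻¹ : Matrix _ _ ℤ_[p]) with hFdef
    have hG : IsUnit G := (u₁⁻¹.isUnit).mul hU₂
    have h1 : intMap (↑u₁⁻¹ : Matrix _ _ ℤ_[p]) * intMap U₁ = 1 := by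
      have : (↑u₁⁻¹ : Matrix _ _ ℤ_[p]) * U₁ = 1 := by
        conv_lhs => rw [← hU₁.unit_spec]
        exact u₁.inv_mul
      rw [← intMap_mul, this, intMap_one]
    have h2 : intMap V₂ * intMap (↑v₂⁻¹ : Matrix _ _ ℤ_[p]) = 1 := by
      have : V₂ * (↑v₂⁻¹ : Matrix _ _ ℤ_[p]) = 1 := by
        conv_lhs => rw [← hV₂.unit_spec]
        exact v₂.mul_inv
      rw [← intMap_mul, this, intMap_one]
    have e : intMap U₂ * pDiag p n m mu * intMap V₂
        = intMap U₁ * pDiag p n m lam * intMap V₁ * intMap B' := by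
      rw [← hABeq, hAeq, hBint]
    have key : intMap G * pDiag p n m mu = pDiag p n m lam * intMap F := by
      calc intMap G * pDiag p n m mu
          = intMap (↑u₁⁻¹ : Matrix (Fin n) (Fin n) ℤ_[p]) * (intMap U₂ * pDiag p n m mu) := by
            rw [hGdef, intMap_mul, Matrix.mul_assoc]
        _ = intMap (↑u₁⁻¹ : Matrix (Fin n) (Fin n) ℤ_[p])
            * (intMap U₂ * pDiag p n m mu * intMap V₂ * intMap (↑v₂⁻¹ : Matrix (Fin m) (Fin m) ℤ_[p])) := by
            rw [Matrix.mul_assoc (intMap U₂ * pDiag p n m mu), h2, Matrix.mul_one]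
        _ = intMap (↑u₁⁻¹ : Matrix (Fin n) (Fin n) ℤ_[p])
            * (intMap U₁ * pDiag p n m lam * intMap V₁ * intMap B'
                * intMap (↑v₂⁻¹ : Matrix (Fin m) (Fin m) ℤ_[p])) := by rw [e]
        _ = pDiag p n m lam * intMap F := by
            rw [hFdef]
            simp only [intMap_mul, Matrix.mul_assoc]
            rw [← Matrix.mul_assoc, h1, Matrix.one_mul]
    have heq : ∀ a b : Fin n, (G a b : ℚ_[p]) * (p : ℚ_[p]) ^ (mu b)
        = (p : ℚ_[p]) ^ (lam a) * (F (Fin.castLE hnm a) (Fin.castLE hnm b) : ℚ_[p]) := by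
      intro a b
      have h := Matrix.ext_iff.mpr key a (Fin.castLE hnm b)
      rwa [entry1, entry2] at h
    apply not_unit_block G hG (Finset.Iic i) (Finset.Ici i)
    · rw [Fin.card_Iic, Fin.card_Ici]
      omega
    · intro a ha b hb
      rw [Finset.mem_Iic] at ha
      rw [Finset.mem_Ici] at hb
      have hd : 1 ≤ lam a - mu b := by
        have h1' := hlam_mono ha
        have h2' := hmu_mono hb
        omega
      apply dvd_of_coe_eq hd (y := F (Fin.castLE hnm a) (Fin.castLE hnm b))
      have hne : (p : ℚ_[p]) ^ (mu b) ≠ 0 := zpow_ne_zero _ hpne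
      apply mul_right_cancel₀ hne
      rw [heq a b]
      have hsplit : (p : ℚ_[p]) ^ (lam a)
          = (p : ℚ_[p]) ^ (lam a - mu b) * (p : ℚ_[p]) ^ (mu b) := by
        rw [← zpow_add₀ hpne]
        congr 1
        omega
      rw [hsplit]
      ring
  · -- left multiplication
    intro C gamma hC hgpos mu hmu i
    by_contra hlt
    push_neg at hlt
    obtain ⟨hmu_mono, U₂, V₂, hU₂, hV₂, hCAeq⟩ := hmu
    obtain ⟨_, W, X, hW, hX, hCeq⟩ := hC
    set D : Matrix (Fin n) (Fin n) ℤ_[p] := Matrix.of (fun i j =>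
      if (i : ℕ) = (j : ℕ) then (p : ℤ_[p]) ^ ((gamma i).toNat) else 0) with hD
    set C' : Matrix (Fin n) (Fin n) ℤ_[p] := W * D * X with hC'
    have hCint : C = intMap C' := by
      rw [hC', hD, intMap_mul, intMap_mul, ← pDiag_eq_intMap n n gamma hgpos, hCeq]
    set u₂ := hU₂.unit with hu₂
    set v₁ := hV₁.unit with hv₁
    set H : Matrix (Fin m) (Fin m) ℤ_[p] := V₂ * (↑v₁⁻¹ : Matrix _ _ ℤ_[p]) with hHdef
    set K : Matrix (Fin n) (Fin n) ℤ_[p] :=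
      (↑u₂⁻¹ : Matrix _ _ ℤ_[p]) * C' * U₁ with hKdef
    have hH : IsUnit H := hV₂.mul (v₁⁻¹.isUnit)
    have h1 : intMap (↑u₂⁻¹ : Matrix _ _ ℤ_[p]) * intMap U₂ = 1 := by
      have : (↑u₂⁻¹ : Matrix _ _ ℤ_[p]) * U₂ = 1 := by
        conv_lhs => rw [← hU₂.unit_spec]
        exact u₂.inv_mul
      rw [← intMap_mul, this, intMap_one]
    have h2 : intMap V₁ * intMap (↑v₁⁻¹ : Matrix _ _ ℤ_[p]) = 1 := by
      have : V₁ * (↑v₁⁻¹ : Matrix _ _ ℤ_[p]) = 1 := by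
        conv_lhs => rw [← hV₁.unit_spec]
        exact v₁.mul_inv
      rw [← intMap_mul, this, intMap_one]
    have e : intMap U₂ * pDiag p n m mu * intMap V₂
        = intMap C' * (intMap U₁ * pDiag p n m lam * intMap V₁) := by
      rw [← hCAeq, hCint, hAeq, Matrix.mul_assoc]
    have key : pDiag p n m mu * intMap H = intMap K * pDiag p n m lam := by
      have lhs : intMap (↑u₂⁻¹ : Matrix (Fin n) (Fin n) ℤ_[p])
          * (intMap U₂ * pDiag p n m mu * intMap V₂ * intMap (↑v₁⁻¹ : Matrix (Fin m) (Fin m) ℤ_[p]))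
          = pDiag p n m mu * intMap H := by
        rw [hHdef]
        simp only [intMap_mul, Matrix.mul_assoc]
        rw [← Matrix.mul_assoc, h1, Matrix.one_mul]
      have rhs : intMap (↑u₂⁻¹ : Matrix (Fin n) (Fin n) ℤ_[p])
          * (intMap C' * (intMap U₁ * pDiag p n m lam * intMap V₁)
              * intMap (↑v₁⁻¹ : Matrix (Fin m) (Fin m) ℤ_[p]))
          = intMap K * pDiag p n m lam := by
        rw [hKdef]
        simp only [intMap_mul, Matrix.mul_assoc]
        rw [h2, Matrix.mul_one]
      rw [← lhs, ← rhs, e]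
    have heq1 : ∀ (a : Fin n) (b : Fin n),
        (p : ℚ_[p]) ^ (mu a) * (H (Fin.castLE hnm a) (Fin.castLE hnm b) : ℚ_[p])
          = (K a b : ℚ_[p]) * (p : ℚ_[p]) ^ (lam b) := by
      intro a b
      have h := Matrix.ext_iff.mpr key a (Fin.castLE hnm b)
      rwa [entry1, entry2] at h
    have heq2 : ∀ (a : Fin n) (j : Fin m), n ≤ (j : ℕ) →
        H (Fin.castLE hnm a) j = 0 := by
      intro a j hj
      have h := Matrix.ext_iff.mpr key a j
      rw [entry2 hnm, entry3 K lam a j hj] at h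
      have hma : (p : ℚ_[p]) ^ (mu a) ≠ 0 := zpow_ne_zero _ hpne
      have : (H (Fin.castLE hnm a) j : ℚ_[p]) = 0 :=
        (mul_eq_zero.mp h).resolve_left hma
      exact Subtype.coe_injective this
    apply not_unit_block H hH
      ((Finset.Ici i).image (Fin.castLE hnm))
      (((Finset.Iic i).image (Fin.castLE hnm))
        ∪ Finset.univ.filter (fun j : Fin m => ¬ (j : ℕ) < n))
    · have hinj : Function.Injective (Fin.castLE hnm) := Fin.castLE_injective hnm
      have hc1 : ((Finset.Ici i).image (Fin.castLE hnm)).card = n - i := by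
        rw [Finset.card_image_of_injective _ hinj, Fin.card_Ici]
      have hc2 : ((Finset.Iic i).image (Fin.castLE hnm)).card = i + 1 := by
        rw [Finset.card_image_of_injective _ hinj, Fin.card_Iic]
      have hfilt : (Finset.univ.filter (fun j : Fin m => ¬ (j : ℕ) < n)).card = m - n := by
        have hcompl : (Finset.univ.filter (fun j : Fin m => (j : ℕ) < n))
            = Finset.univ.image (Fin.castLE hnm) := by
          ext j
          constructor
          · intro hj
            rw [Finset.mem_filter] at hj
            exact Finset.mem_image.mpr ⟨⟨(j : ℕ), hj.2⟩, Finset.mem_univ _, by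
              simp [Fin.ext_iff]⟩
          · intro hj
            rw [Finset.mem_filter]
            refine ⟨Finset.mem_univ _, ?_⟩
            obtain ⟨a, -, rfl⟩ := Finset.mem_image.mp hj
            simpa using a.isLt
        have hadd := Finset.card_filter_add_card_filter_not
          (s := (Finset.univ : Finset (Fin m))) (p := fun j : Fin m => (j : ℕ) < n)
        rw [hcompl, Finset.card_image_of_injective _ hinj] at hadd
        simp only [Finset.card_univ, Fintype.card_fin] at hadd
        omega
      have hdisj : Disjoint ((Finset.Iic i).image (Fin.castLE hnm))
          (Finset.univ.filter (fun j : Fin m => ¬ (j : ℕ) < n)) := by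
        rw [Finset.disjoint_left]
        rintro a ha ha'
        simp only [Finset.mem_image] at ha
        obtain ⟨b, -, rfl⟩ := ha
        simp only [Finset.mem_filter] at ha'
        exact ha'.2 (by simpa using b.isLt)
      rw [hc1, Finset.card_union_of_disjoint hdisj, hc2, hfilt]
      omega
    · intro r hr c hc
      simp only [Finset.mem_image, Finset.mem_Ici] at hr
      obtain ⟨a, ha, rfl⟩ := hr
      rw [Finset.mem_union] at hc
      rcases hc with hc | hc
      · simp only [Finset.mem_image, Finset.mem_Iic] at hc
        obtain ⟨b, hb, rfl⟩ := hc
        have hd : 1 ≤ lam b - mu a := by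
          have h1' := hlam_mono hb
          have h2' := hmu_mono ha
          omega
        apply dvd_of_coe_eq hd (y := K a b)
        have hne : (p : ℚ_[p]) ^ (mu a) ≠ 0 := zpow_ne_zero _ hpne
        apply mul_right_cancel₀ hne
        have h := heq1 a b
        have hsplit : (p : ℚ_[p]) ^ (lam b)
            = (p : ℚ_[p]) ^ (lam b - mu a) * (p : ℚ_[p]) ^ (mu a) := by
          rw [← zpow_add₀ hpne]
          congr 1
          omega
        rw [hsplit] at h
        calc (H (Fin.castLE hnm a) (Fin.castLE hnm b) : ℚ_[p]) * (p : ℚ_[p]) ^ (mu a)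
            = (p : ℚ_[p]) ^ (mu a)
              * (H (Fin.castLE hnm a) (Fin.castLE hnm b) : ℚ_[p]) := by ring
          _ = (K a b : ℚ_[p]) * ((p : ℚ_[p]) ^ (lam b - mu a) * (p : ℚ_[p]) ^ (mu a)) := h
          _ = (p : ℚ_[p]) ^ (lam b - mu a) * (K a b : ℚ_[p]) * (p : ℚ_[p]) ^ (mu a) := by ring
      · simp only [Finset.mem_filter] at hc
        rw [heq2 a c (by omega)]
        exact dvd_zero _
end

section
/- Let A be the random N × N matrix over ℤ_p whose columns v_N, v_{N−1}, ..., v_1 are sampled from right to left, where the conditional law of v_i given v_{i+1},...,v_N is the additive Haar measure on ℤ_p^N conditioned on v_i mod p not lying in the 𝔽_p-span of v_{i+1} mod p, ..., v_N mod p (the zero subspace when i = N). Then A is distributed according to the Haar probability measure on GL_N(ℤ_p). -/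
open MeasureTheory

/-- The law of the first `k` sampled columns (sampled "right to left":
step `j` samples the column `v_{N-j}` of the paper, conditioned so that its
reduction mod `p` avoids the `𝔽_p`-span of the reductions of the previously
sampled columns).  `ν` is the (additive Haar) law of a single unconditioned
column.  The result after `j` steps is stored at position `j-1`. -/
noncomputable def buildCols (p N : ℕ) [Fact p.Prime] [MeasurableSpace ℤ_[p]]
    (ν : Measure (Fin N → ℤ_[p])) : ℕ → Measure (ℕ → Fin N → ℤ_[p])
  | 0 => Measure.dirac (fun _ => 0)
  | (k+1) => (buildCols p N ν k).bind (fun ws =>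
      (ProbabilityTheory.cond ν
        {v | (fun i => (PadicInt.toZMod (v i) : ZMod p)) ∉
          Submodule.span (ZMod p)
            {x | ∃ j, j < k ∧ x = fun i => (PadicInt.toZMod (ws j i) : ZMod p)}}).map
        (fun v => Function.update ws k v))


namespace HaarGLZp

instance zmodMS (n : ℕ) : MeasurableSpace (ZMod n) := ⊤
instance zmodMSC (n : ℕ) : MeasurableSingletonClass (ZMod n) := ⟨fun _ => trivial⟩

variable (p : ℕ) [Fact p.Prime] [MeasurableSpace ℤ_[p]] [BorelSpace ℤ_[p]]

lemma measurable_toZMod : Measurable (PadicInt.toZMod : ℤ_[p] → ZMod p) := by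
  haveI : NeZero p := ⟨(Fact.out : p.Prime).ne_zero⟩
  apply measurable_to_countable
  intro y
  have key : ∀ z : ZMod p, {x : ℤ_[p] | PadicInt.toZMod x = z}
      = {x : ℤ_[p] | ‖x - ((z.val : ℕ) : ℤ_[p])‖ < 1} := by
    intro z
    have hz : PadicInt.toZMod ((z.val : ℕ) : ℤ_[p]) = z := by
      rw [map_natCast]; exact ZMod.natCast_rightInverse z
    ext x
    simp only [Set.mem_setOf_eq]
    rw [← PadicInt.mem_nonunits, ← IsLocalRing.mem_maximalIdeal, ← PadicInt.ker_toZMod,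
      RingHom.mem_ker, map_sub, hz, sub_eq_zero]
  have : (PadicInt.toZMod ⁻¹' {PadicInt.toZMod y} : Set ℤ_[p])
      = {x : ℤ_[p] | ‖x - (((PadicInt.toZMod y).val : ℕ) : ℤ_[p])‖ < 1} := by
    rw [← key]; rfl
  rw [this]
  exact measurableSet_lt ((continuous_norm.comp (continuous_id.sub continuous_const)).measurable)
    measurable_const

variable (N : ℕ)

/-- reduction mod `p` of a column vector -/
noncomputable def red (v : Fin N → ℤ_[p]) : Fin N → ZMod p := fun i => PadicInt.toZMod (v i)

lemma measurable_red : Measurable (red p N) :=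
  measurable_pi_iff.2 fun i => (measurable_toZMod p).comp (measurable_pi_apply i)

lemma measurableSet_finite {α : Type*} [MeasurableSpace α] [Finite α]
    [MeasurableSingletonClass α] (s : Set α) : MeasurableSet s :=
  s.toFinite.measurableSet

lemma red_add (v w : Fin N → ℤ_[p]) : red p N (v + w) = red p N v + red p N w := by
  funext i; simp [red, map_add]


variable {N}
lemma setOf_eq_range (k : ℕ) (ws : ℕ → Fin N → ℤ_[p]) :
    {x | ∃ j, j < k ∧ x = red p N (ws j)} = Set.range (fun j : Fin k => red p N (ws (j : ℕ))) := by
  ext x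
  constructor
  · rintro ⟨j, hj, rfl⟩; exact ⟨⟨j, hj⟩, rfl⟩
  · rintro ⟨j, rfl⟩; exact ⟨(j : ℕ), j.2, rfl⟩

lemma span_range_ne_top {k : ℕ} (hk : k < N) (g : Fin k → (Fin N → ZMod p)) :
    Submodule.span (ZMod p) (Set.range g) ≠ ⊤ := by
  intro h
  have h1 := rank_span_le (R := ZMod p) (Set.range g)
  rw [h] at h1
  have h2 : Module.rank (ZMod p) (Fin N → ZMod p) = N := by simp [rank_fun']
  rw [rank_top, h2] at h1
  have h3 : (Cardinal.mk (Set.range g)) ≤ (k : Cardinal) := by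
    simpa using Cardinal.mk_range_le (f := g)
  have : (N : Cardinal) ≤ (k : Cardinal) := h1.trans h3
  exact absurd (Nat.cast_le.mp this) (Nat.not_le.mpr hk)

variable (ν : Measure (Fin N → ℤ_[p])) [IsProbabilityMeasure ν] [ν.IsAddLeftInvariant]

lemma fiber_eq (x : Fin N → ZMod p) :
    ν (red p N ⁻¹' {x}) = ν (red p N ⁻¹' {(0 : Fin N → ZMod p)}) := by
  haveI : NeZero p := ⟨(Fact.out : p.Prime).ne_zero⟩
  set a : Fin N → ℤ_[p] := fun i => (((x i).val : ℕ) : ℤ_[p]) with ha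
  have hra : red p N a = x := by
    funext i
    simp only [red, ha, map_natCast]
    exact ZMod.natCast_rightInverse (x i)
  have hset : (fun v => a + v) ⁻¹' (red p N ⁻¹' {x}) = red p N ⁻¹' {(0 : Fin N → ZMod p)} := by
    ext v
    simp only [Set.mem_preimage, Set.mem_singleton_iff]
    rw [red_add, hra]
    constructor
    · intro h
      funext i
      have := congrFun h i
      simpa using this
    · intro h; rw [h, add_zero]
  rw [← hset, measure_preimage_add]

lemma fiber_ne_zero (x : Fin N → ZMod p) : ν (red p N ⁻¹' {x}) ≠ 0 := by
  haveI : NeZero p := ⟨(Fact.out : p.Prime).ne_zero⟩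
  rw [fiber_eq p ν x]
  intro h0
  have hcover : (Set.univ : Set (Fin N → ℤ_[p])) ⊆ ⋃ y : Fin N → ZMod p, red p N ⁻¹' {y} :=
    fun v _ => Set.mem_iUnion.2 ⟨red p N v, rfl⟩
  have : (ν Set.univ) ≤ ∑' y : Fin N → ZMod p, ν (red p N ⁻¹' {y}) :=
    (measure_mono hcover).trans (measure_iUnion_le _)
  rw [measure_univ] at this
  have hz : ∀ y : Fin N → ZMod p, ν (red p N ⁻¹' {y}) = 0 := fun y => (fiber_eq p ν y).trans h0
  simp [hz] at this

lemma avoid_ne_zero (W : Submodule (ZMod p) (Fin N → ZMod p)) (hW : W ≠ ⊤) :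
    ν {v | red p N v ∉ W} ≠ 0 := by
  obtain ⟨x, hx⟩ : ∃ x, x ∉ W := by
    by_contra h
    push_neg at h
    exact hW (Submodule.eq_top_iff'.2 h)
  have hsub : red p N ⁻¹' {x} ⊆ {v | red p N v ∉ W} := by
    intro v hv
    simp only [Set.mem_preimage, Set.mem_singleton_iff] at hv
    simpa [hv] using hx
  exact fun h0 => fiber_ne_zero p ν x (le_antisymm (le_trans (measure_mono hsub) h0.le) (zero_le))




/-- Uniqueness of invariant probability measures on compact additive groups. -/
lemma addHaar_unique {G : Type*} [AddGroup G] [TopologicalSpace G] [IsTopologicalAddGroup G]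
    [T2Space G] [CompactSpace G] [MeasurableSpace G] [BorelSpace G]
    (μ₁ μ₂ : Measure G) [IsProbabilityMeasure μ₁] [IsProbabilityMeasure μ₂]
    [μ₁.IsAddLeftInvariant] [μ₂.IsAddLeftInvariant] : μ₁ = μ₂ := by
  haveI : LocallyCompactSpace G := inferInstance
  haveI h1 : μ₁.IsOpenPosMeasure :=
    isOpenPosMeasure_of_addLeftInvariant_of_compact Set.univ isCompact_univ (by simp)
  haveI h2 : μ₂.IsOpenPosMeasure :=
    isOpenPosMeasure_of_addLeftInvariant_of_compact Set.univ isCompact_univ (by simp)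
  haveI : μ₁.IsAddHaarMeasure := ⟨⟩
  haveI : μ₂.IsAddHaarMeasure := ⟨⟩
  exact Measure.isAddHaarMeasure_eq_of_isProbabilityMeasure μ₁ μ₂

lemma mulHaar_unique {G : Type*} [Group G] [TopologicalSpace G] [IsTopologicalGroup G]
    [T2Space G] [CompactSpace G] [MeasurableSpace G] [BorelSpace G]
    (μ₁ μ₂ : Measure G) [IsProbabilityMeasure μ₁] [IsProbabilityMeasure μ₂]
    [μ₁.IsMulLeftInvariant] [μ₂.IsMulLeftInvariant] : μ₁ = μ₂ := by
  haveI : LocallyCompactSpace G := inferInstance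
  haveI h1 : μ₁.IsOpenPosMeasure :=
    isOpenPosMeasure_of_mulLeftInvariant_of_compact Set.univ isCompact_univ (by simp)
  haveI h2 : μ₂.IsOpenPosMeasure :=
    isOpenPosMeasure_of_mulLeftInvariant_of_compact Set.univ isCompact_univ (by simp)
  haveI : μ₁.IsHaarMeasure := ⟨⟩
  haveI : μ₂.IsHaarMeasure := ⟨⟩
  exact Measure.isHaarMeasure_eq_of_isProbabilityMeasure μ₁ μ₂

variable {α β γ : Type*} [MeasurableSpace α] [MeasurableSpace β] [MeasurableSpace γ]

lemma map_bind (μ : Measure α) {f : α → Measure β} {g : β → γ}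
    (hf : Measurable f) (hg : Measurable g) :
    (μ.bind f).map g = μ.bind (fun a => (f a).map g) := by
  have hm : Measurable (fun a => (f a).map g) := (Measure.measurable_map g hg).comp hf
  ext s hs
  rw [Measure.map_apply hg hs, Measure.bind_apply (hg hs) hf.aemeasurable, Measure.bind_apply hs hm.aemeasurable]
  exact lintegral_congr fun a => (Measure.map_apply hg hs).symm

lemma bind_map (μ : Measure α) {f : β → Measure γ} {g : α → β}
    (hf : Measurable f) (hg : Measurable g) :
    (μ.map g).bind f = μ.bind (f ∘ g) := by
  ext s hs
  rw [Measure.bind_apply hs hf.aemeasurable, Measure.bind_apply hs (hf.comp hg).aemeasurable]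
  exact lintegral_map ((Measure.measurable_coe hs).comp hf) hg

/-- Equivariance of conditioning under a measure-preserving measurable map. -/
lemma cond_map (ν : Measure α) {L : α → α} (hL : Measurable L) (hLν : ν.map L = ν)
    {S : Set α} (hS : MeasurableSet S) :
    (ProbabilityTheory.cond ν (L ⁻¹' S)).map L = ProbabilityTheory.cond ν S := by
  unfold ProbabilityTheory.cond
  rw [Measure.map_smul, ← Measure.restrict_map hL hS, hLν]
  congr 1
  conv_rhs => rw [← hLν]
  rw [Measure.map_apply hL hS]


section Build
open ProbabilityTheory
variable (p N : ℕ) [Fact p.Prime] [MeasurableSpace ℤ_[p]] [BorelSpace ℤ_[p]]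

/-- the conditioning set -/
def Sset (k : ℕ) (ws : ℕ → Fin N → ℤ_[p]) : Set (Fin N → ℤ_[p]) :=
  {v | red p N v ∉ Submodule.span (ZMod p) {x | ∃ j, j < k ∧ x = red p N (ws j)}}

variable (ν : Measure (Fin N → ℤ_[p])) [IsProbabilityMeasure ν] [ν.IsAddLeftInvariant]

lemma buildCols_succ (k : ℕ) :
    buildCols p N ν (k + 1) = (buildCols p N ν k).bind (fun ws =>
      (ProbabilityTheory.cond ν (Sset p N k ws)).map (fun v => Function.update ws k v)) := rfl

lemma measurableSet_Sset (k : ℕ) (ws : ℕ → Fin N → ℤ_[p]) :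
    MeasurableSet (Sset p N k ws) := by
  haveI : NeZero p := ⟨(Fact.out : p.Prime).ne_zero⟩
  exact measurable_red p N (measurableSet_finite
    {y | y ∉ Submodule.span (ZMod p) {x | ∃ j, j < k ∧ x = red p N (ws j)}})

lemma ne_zero_Sset {k : ℕ} (hk : k < N) (ws : ℕ → Fin N → ℤ_[p]) :
    ν (Sset p N k ws) ≠ 0 := by
  unfold Sset
  rw [setOf_eq_range]
  exact avoid_ne_zero p ν _ (span_range_ne_top p hk _)

/-- the reduction of the first `k` columns -/
noncomputable def dmap (k : ℕ) (ws : ℕ → Fin N → ℤ_[p]) : Fin k → Fin N → ZMod p :=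
  fun j => red p N (ws (j : ℕ))

lemma measurable_dmap (k : ℕ) : Measurable (dmap p N k) :=
  measurable_pi_iff.2 fun j => (measurable_red p N).comp (measurable_pi_apply (j : ℕ))

lemma Sset_eq_T (k : ℕ) (ws : ℕ → Fin N → ℤ_[p]) :
    Sset p N k ws = {v | red p N v ∉ Submodule.span (ZMod p) (Set.range (dmap p N k ws))} := by
  unfold Sset
  rw [setOf_eq_range]
  rfl

lemma measurable_pair_update (k : ℕ) :
    Measurable (fun q : (ℕ → Fin N → ℤ_[p]) × (Fin N → ℤ_[p]) =>
      Function.update q.1 k q.2) := by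
  apply measurable_pi_iff.2
  intro j
  by_cases h : j = k
  · subst h; simp only [Function.update_apply, if_pos rfl]; exact measurable_snd
  · simp only [Function.update_apply, if_neg h]
    exact (measurable_pi_apply j).comp measurable_fst

lemma measurable_kernel {k : ℕ} (hk : k < N) :
    Measurable (fun ws : ℕ → Fin N → ℤ_[p] =>
      (ProbabilityTheory.cond ν (Sset p N k ws)).map (fun v => Function.update ws k v)) := by
  haveI : NeZero p := ⟨(Fact.out : p.Prime).ne_zero⟩
  apply Measure.measurable_of_measurable_coe
  intro s hs
  have hcond : ∀ d : Fin k → Fin N → ZMod p,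
      IsProbabilityMeasure (ProbabilityTheory.cond ν
        {v | red p N v ∉ Submodule.span (ZMod p) (Set.range d)}) := fun d =>
    ProbabilityTheory.cond_isProbabilityMeasure (avoid_ne_zero p ν _ (span_range_ne_top p hk d))
  have key : ∀ ws : ℕ → Fin N → ℤ_[p],
      ((ProbabilityTheory.cond ν (Sset p N k ws)).map (fun v => Function.update ws k v)) s
      = ∑ d : Fin k → Fin N → ZMod p,
          Set.indicator (dmap p N k ⁻¹' {d})
            (fun ws' => (ProbabilityTheory.cond ν
              {v | red p N v ∉ Submodule.span (ZMod p) (Set.range d)})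
              ((fun v => Function.update ws' k v) ⁻¹' s)) ws := by
    intro ws
    rw [Finset.sum_eq_single (dmap p N k ws)]
    · rw [Set.indicator_of_mem (by exact rfl : ws ∈ dmap p N k ⁻¹' {dmap p N k ws})]
      rw [Measure.map_apply (measurable_update _) hs, Sset_eq_T]
    · intro d _ hd
      apply Set.indicator_of_notMem
      simp only [Set.mem_preimage, Set.mem_singleton_iff]
      exact fun h => hd h.symm
    · intro h
      exact absurd (Finset.mem_univ _) h
  simp only [key]
  apply Finset.measurable_sum
  intro d _
  apply Measurable.indicator
  · haveI := hcond d
    have hs' : MeasurableSet ((fun q : (ℕ → Fin N → ℤ_[p]) × (Fin N → ℤ_[p]) =>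
        Function.update q.1 k q.2) ⁻¹' s) := measurable_pair_update p N k hs
    exact measurable_measure_prodMk_left hs'
  · exact measurable_dmap p N k (measurableSet_finite {d})

lemma buildCols_zero : buildCols p N ν 0 = Measure.dirac (fun _ => 0) := rfl

lemma buildCols_prob (k : ℕ) (hk : k ≤ N) : IsProbabilityMeasure (buildCols p N ν k) := by
  induction k with
  | zero => rw [buildCols_zero]; infer_instance
  | succ k ih =>
      haveI := ih (Nat.le_of_succ_le hk)
      constructor
      rw [buildCols_succ, Measure.bind_apply MeasurableSet.univ
        (measurable_kernel p N ν (Nat.lt_of_succ_le hk)).aemeasurable]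
      have : ∀ ws : ℕ → Fin N → ℤ_[p],
          ((ProbabilityTheory.cond ν (Sset p N k ws)).map (fun v => Function.update ws k v))
            Set.univ = 1 := by
        intro ws
        haveI := ProbabilityTheory.cond_isProbabilityMeasure
          (μ := ν) (ne_zero_Sset p N ν (Nat.lt_of_succ_le hk) ws)
        haveI : IsProbabilityMeasure ((ProbabilityTheory.cond ν (Sset p N k ws)).map
          (fun v => Function.update ws k v)) :=
          Measure.isProbabilityMeasure_map (f := fun v => Function.update ws k v)
            (measurable_update (X := fun _ : ℕ => Fin N → ℤ_[p]) ws (a := k)).aemeasurable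
        exact measure_univ
      simp only [this, lintegral_one, measure_univ]

/-- the good event: reductions of the first `k` columns are linearly independent -/
def Eset (k : ℕ) : Set (ℕ → Fin N → ℤ_[p]) :=
  {ws | LinearIndependent (ZMod p) (dmap p N k ws)}

lemma measurableSet_Eset (k : ℕ) : MeasurableSet (Eset p N k) := by
  haveI : NeZero p := ⟨(Fact.out : p.Prime).ne_zero⟩
  exact measurable_dmap p N k
    (measurableSet_finite {d : Fin k → Fin N → ZMod p | LinearIndependent (ZMod p) d})

lemma dmap_update_snoc (k : ℕ) (ws : ℕ → Fin N → ℤ_[p]) (v : Fin N → ℤ_[p]) :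
    dmap p N (k + 1) (Function.update ws k v) = Fin.snoc (dmap p N k ws) (red p N v) := by
  funext j
  refine Fin.lastCases ?_ ?_ j
  · simp [dmap, Fin.val_last, Fin.snoc_last]
  · intro j
    have hj : (j : ℕ) ≠ k := Nat.ne_of_lt j.2
    simp [dmap, Fin.snoc_castSucc, Fin.coe_castSucc, Function.update_of_ne hj]

lemma cond_self_eq_one {S : Set (Fin N → ℤ_[p])} (hS : MeasurableSet S) (h0 : ν S ≠ 0) :
    ProbabilityTheory.cond ν S S = 1 := by
  rw [ProbabilityTheory.cond_apply hS, Set.inter_self]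
  exact ENNReal.inv_mul_cancel h0 (measure_ne_top ν S)

lemma buildCols_Eset (k : ℕ) (hk : k ≤ N) : buildCols p N ν k (Eset p N k) = 1 := by
  induction k with
  | zero =>
      have : Eset p N 0 = Set.univ := by
        ext ws
        simp only [Eset, Set.mem_setOf_eq, Set.mem_univ, iff_true]
        exact linearIndependent_empty_type
      rw [buildCols_zero, this]
      simp
  | succ k ih =>
      haveI hprob := buildCols_prob p N ν k (Nat.le_of_succ_le hk)
      have hklt : k < N := Nat.lt_of_succ_le hk
      rw [buildCols_succ, Measure.bind_apply (measurableSet_Eset p N (k+1))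
        (measurable_kernel p N ν hklt).aemeasurable]
      have hae : ∀ᵐ ws ∂(buildCols p N ν k), ws ∈ Eset p N k := by
        rw [ae_iff]
        have := ih (Nat.le_of_succ_le hk)
        rw [← prob_compl_eq_zero_iff (measurableSet_Eset p N k)] at this
        exact this
      have hone : ∀ ws ∈ Eset p N k,
          ((ProbabilityTheory.cond ν (Sset p N k ws)).map (fun v => Function.update ws k v))
            (Eset p N (k+1)) = 1 := by
        intro ws hws
        haveI := ProbabilityTheory.cond_isProbabilityMeasure
          (μ := ν) (ne_zero_Sset p N ν hklt ws)
        rw [Measure.map_apply (measurable_update _) (measurableSet_Eset p N (k+1))]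
        have hsub : Sset p N k ws ⊆ (fun v => Function.update ws k v) ⁻¹' Eset p N (k+1) := by
          intro v hv
          simp only [Set.mem_preimage, Eset, Set.mem_setOf_eq]
          rw [dmap_update_snoc, linearIndependent_fin_snoc]
          refine ⟨hws, ?_⟩
          rw [Sset_eq_T] at hv
          exact hv
        refine le_antisymm prob_le_one ?_
        calc (1 : ENNReal) = ProbabilityTheory.cond ν (Sset p N k ws) (Sset p N k ws) :=
              (cond_self_eq_one p N ν (measurableSet_Sset p N k ws)
                (ne_zero_Sset p N ν hklt ws)).symm
          _ ≤ _ := measure_mono hsub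
      calc ∫⁻ ws, ((ProbabilityTheory.cond ν (Sset p N k ws)).map
              (fun v => Function.update ws k v)) (Eset p N (k+1)) ∂(buildCols p N ν k)
          = ∫⁻ _, 1 ∂(buildCols p N ν k) := by
            apply lintegral_congr_ae
            filter_upwards [hae] with ws hws
            exact hone ws hws
        _ = 1 := by simp

lemma isUnit_of_Eset {ws : ℕ → Fin N → ℤ_[p]} (hws : ws ∈ Eset p N N) :
    IsUnit (Matrix.of fun i (c : Fin N) => ws (N - 1 - (c : ℕ)) i) := by
  set M : Matrix (Fin N) (Fin N) ℤ_[p] := Matrix.of fun i (c : Fin N) => ws (N - 1 - (c : ℕ)) i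
  set Mbar : Matrix (Fin N) (Fin N) (ZMod p) :=
    (PadicInt.toZMod (p := p)).mapMatrix M with hMbar
  have hMbarUnit : IsUnit Mbar := by
    rw [← Matrix.linearIndependent_cols_iff_isUnit]
    have hσ : ∀ c : Fin N, N - 1 - (c : ℕ) < N := fun c => by omega
    let σ : Fin N → Fin N := fun c => ⟨N - 1 - (c : ℕ), hσ c⟩
    have hinj : Function.Injective σ := by
      intro a b hab
      have h1 : N - 1 - (a : ℕ) = N - 1 - (b : ℕ) := congrArg Fin.val hab
      have := a.2; have := b.2
      exact Fin.ext (by omega)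
    have : (fun c => Mbar.transpose c) = dmap p N N ws ∘ σ := by
      funext c
      funext i
      simp [Mbar, M, dmap, red, σ, Matrix.transpose]
    rw [show Mbar.col = (fun c => Mbar.transpose c) from rfl, this]
    exact hws.comp σ hinj
  rw [Matrix.isUnit_iff_isUnit_det]
  by_contra hdet
  have h1 : M.det ∈ nonunits ℤ_[p] := hdet
  rw [← IsLocalRing.mem_maximalIdeal, ← PadicInt.ker_toZMod, RingHom.mem_ker] at h1
  rw [Matrix.isUnit_iff_isUnit_det, ← RingHom.map_det, h1] at hMbarUnit
  exact hMbarUnit.ne_zero rfl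

lemma measurable_mulVec (g : Matrix (Fin N) (Fin N) ℤ_[p]) :
    Measurable (fun v : Fin N → ℤ_[p] => g.mulVec v) := by
  apply measurable_pi_iff.2
  intro i
  simp only [Matrix.mulVec, dotProduct]
  exact Finset.measurable_sum Finset.univ
    (fun j _ => ((continuous_const_mul (g i j)).measurable).comp (measurable_pi_apply j))

lemma map_mulVec_eq_self (g : Matrix (Fin N) (Fin N) ℤ_[p]) (hg : IsUnit g) :
    ν.map (fun v => g.mulVec v) = ν := by
  obtain ⟨u, rfl⟩ := hg
  have hsurj : Function.Surjective (fun v : Fin N → ℤ_[p] => (u : Matrix (Fin N) (Fin N) ℤ_[p]).mulVec v) := by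
    intro v
    refine ⟨((u⁻¹ : (Matrix (Fin N) (Fin N) ℤ_[p])ˣ) : Matrix (Fin N) (Fin N) ℤ_[p]).mulVec v, ?_⟩
    simp [Matrix.mulVec_mulVec]
  have hadd : ∀ v w : Fin N → ℤ_[p],
      (u : Matrix (Fin N) (Fin N) ℤ_[p]).mulVec (v + w)
        = (u : Matrix (Fin N) (Fin N) ℤ_[p]).mulVec v + (u : Matrix (Fin N) (Fin N) ℤ_[p]).mulVec w :=
    fun v w => Matrix.mulVec_add _ v w
  haveI : (ν.map (fun v => (u : Matrix (Fin N) (Fin N) ℤ_[p]).mulVec v)).IsAddLeftInvariant :=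
    MeasureTheory.isAddLeftInvariant_map (⟨fun v => (u : Matrix (Fin N) (Fin N) ℤ_[p]).mulVec v, hadd⟩ :
      AddHom (Fin N → ℤ_[p]) (Fin N → ℤ_[p])) (measurable_mulVec p N _) hsurj
  haveI : IsProbabilityMeasure (ν.map (fun v => (u : Matrix (Fin N) (Fin N) ℤ_[p]).mulVec v)) :=
    Measure.isProbabilityMeasure_map (measurable_mulVec p N _).aemeasurable
  exact addHaar_unique _ ν

lemma red_mulVec (g : Matrix (Fin N) (Fin N) ℤ_[p]) (v : Fin N → ℤ_[p]) :
    red p N (g.mulVec v)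
      = ((PadicInt.toZMod (p := p)).mapMatrix g).mulVec (red p N v) := by
  funext i
  simp [red, Matrix.mulVec, dotProduct, map_sum]

lemma preimage_Sset (g : Matrix (Fin N) (Fin N) ℤ_[p]) (hg : IsUnit g) (k : ℕ)
    (ws : ℕ → Fin N → ℤ_[p]) :
    (fun v => g.mulVec v) ⁻¹' (Sset p N k (fun j => g.mulVec (ws j))) = Sset p N k ws := by
  haveI : NeZero p := ⟨(Fact.out : p.Prime).ne_zero⟩
  set gbar := (PadicInt.toZMod (p := p)).mapMatrix g with hgbar
  have hgbarUnit : IsUnit gbar := hg.map _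
  have hginj : Function.Injective (gbar.mulVec) :=
    Matrix.mulVec_injective_iff_isUnit.mpr hgbarUnit
  have hd : dmap p N k (fun j => g.mulVec (ws j)) = fun j => gbar.mulVec (dmap p N k ws j) := by
    funext j
    exact red_mulVec p N g (ws (j : ℕ))
  ext v
  simp only [Set.mem_preimage, Sset_eq_T, Set.mem_setOf_eq, hd, red_mulVec p N g v]
  -- marker
  have hrange : Set.range (fun j : Fin k => gbar.mulVec (dmap p N k ws j))
      = gbar.mulVec '' Set.range (dmap p N k ws) := by
    rw [← Set.range_comp]; rfl
  rw [hrange]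
  have hspan : Submodule.span (ZMod p) (gbar.mulVec '' Set.range (dmap p N k ws))
      = Submodule.map gbar.mulVecLin (Submodule.span (ZMod p) (Set.range (dmap p N k ws))) := by
    rw [← Submodule.span_image]
    congr 1
  rw [hspan]
  constructor
  · intro h hmem
    exact h (Submodule.mem_map_of_mem hmem)
  · intro h hmem
    apply h
    obtain ⟨y, hy, hxy⟩ := hmem
    rw [Matrix.mulVecLin_apply] at hxy
    rwa [← hginj hxy]

lemma buildCols_map_mulVec (g : Matrix (Fin N) (Fin N) ℤ_[p]) (hg : IsUnit g)
    (k : ℕ) (hk : k ≤ N) :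
    (buildCols p N ν k).map (fun ws j => g.mulVec (ws j)) = buildCols p N ν k := by
  have hT : Measurable (fun (ws : ℕ → Fin N → ℤ_[p]) j => g.mulVec (ws j)) :=
    measurable_pi_iff.2 fun j => (measurable_mulVec p N g).comp (measurable_pi_apply j)
  induction k with
  | zero =>
      rw [buildCols_zero, Measure.map_dirac' hT]
      congr 1
      funext j
      exact Matrix.mulVec_zero g
  | succ k ih =>
      have hklt : k < N := Nat.lt_of_succ_le hk
      have ih' := ih (Nat.le_of_succ_le hk)
      rw [buildCols_succ, map_bind _ (measurable_kernel p N ν hklt) hT]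
      conv_rhs => rw [← ih', bind_map _ (measurable_kernel p N ν hklt) hT]
      congr 1
      funext ws
      show ((ProbabilityTheory.cond ν (Sset p N k ws)).map (fun v => Function.update ws k v)).map
          (fun ws j => g.mulVec (ws j))
        = (ProbabilityTheory.cond ν (Sset p N k (fun j => g.mulVec (ws j)))).map
            (fun v => Function.update (fun j => g.mulVec (ws j)) k v)
      rw [Measure.map_map hT (measurable_update _)]
      have hcomm : ((fun (ws : ℕ → Fin N → ℤ_[p]) j => g.mulVec (ws j)) ∘
            (fun v => Function.update ws k v))
          = (fun v => Function.update (fun j => g.mulVec (ws j)) k v) ∘ (fun v => g.mulVec v) := by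
        funext v
        funext j
        simp only [Function.comp_apply, Function.update_apply]
        by_cases h : j = k
        · simp [h]
        · simp [h]
      rw [hcomm, ← Measure.map_map
          (measurable_update (X := fun _ : ℕ => Fin N → ℤ_[p]) (fun j => g.mulVec (ws j)) (a := k))
          (measurable_mulVec p N g),
        ← preimage_Sset p N g hg k ws,
        cond_map ν (measurable_mulVec p N g) (map_mulVec_eq_self p N ν g hg)
          (measurableSet_Sset p N k (fun j => g.mulVec (ws j)))]

end Build
end HaarGLZp


/-- Sampling the columns of a matrix from right to left, each additively
Haar-distributed conditioned on its reduction mod `p` avoiding the span of the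
reductions of the previously sampled columns, produces a Haar-distributed
element of `GL_N(ℤ_p)`. -/
theorem haar_glzp_column_sampling (p N : ℕ) [Fact p.Prime]
    [MeasurableSpace ℤ_[p]] [BorelSpace ℤ_[p]]
    (ν : Measure (Fin N → ℤ_[p])) [IsProbabilityMeasure ν] [ν.IsAddLeftInvariant]
    [MeasurableSpace (Matrix (Fin N) (Fin N) ℤ_[p])]
    [BorelSpace (Matrix (Fin N) (Fin N) ℤ_[p])]
    [MeasurableSpace (Units (Matrix (Fin N) (Fin N) ℤ_[p]))]
    [BorelSpace (Units (Matrix (Fin N) (Fin N) ℤ_[p]))]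
    (μH : Measure (Units (Matrix (Fin N) (Fin N) ℤ_[p])))
    [IsProbabilityMeasure μH] [μH.IsMulLeftInvariant] :
    (buildCols p N ν N).map
        (fun ws => Matrix.of fun i (c : Fin N) => ws (N - 1 - (c : ℕ)) i)
      = μH.map (fun U : Units (Matrix (Fin N) (Fin N) ℤ_[p]) => (U : Matrix (Fin N) (Fin N) ℤ_[p])) := by
  -- compactness of the unit group
  have hrange_ep : Set.range (Units.embedProduct (Matrix (Fin N) (Fin N) ℤ_[p]))
      = {q : (Matrix (Fin N) (Fin N) ℤ_[p]) × (Matrix (Fin N) (Fin N) ℤ_[p])ᵐᵒᵖ | q.1 * q.2.unop = 1 ∧ q.2.unop * q.1 = 1} := by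
    ext q
    constructor
    · rintro ⟨u, rfl⟩
      simp [Units.embedProduct]
    · rintro ⟨h1, h2⟩
      refine ⟨⟨q.1, q.2.unop, h1, h2⟩, ?_⟩
      show (q.1, MulOpposite.op (q.2.unop)) = q
      rw [MulOpposite.op_unop]
  haveI : CompactSpace (Matrix (Fin N) (Fin N) ℤ_[p]) := inferInstanceAs (CompactSpace (Fin N → Fin N → ℤ_[p]))
  haveI : CompactSpace (Matrix (Fin N) (Fin N) ℤ_[p])ᵐᵒᵖ :=
    (MulOpposite.opHomeomorph : Matrix (Fin N) (Fin N) ℤ_[p] ≃ₜ (Matrix (Fin N) (Fin N) ℤ_[p])ᵐᵒᵖ).compactSpace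
  have hclosed : IsClosed (Set.range (Units.embedProduct (Matrix (Fin N) (Fin N) ℤ_[p]))) := by
    rw [hrange_ep]
    have hcont : Continuous (fun q : (Matrix (Fin N) (Fin N) ℤ_[p]) × (Matrix (Fin N) (Fin N) ℤ_[p])ᵐᵒᵖ => (q.1 * q.2.unop, q.2.unop * q.1)) :=
      Continuous.prodMk
        (continuous_fst.mul (MulOpposite.continuous_unop.comp continuous_snd))
        ((MulOpposite.continuous_unop.comp continuous_snd).mul continuous_fst)
    have hset : {q : (Matrix (Fin N) (Fin N) ℤ_[p]) × (Matrix (Fin N) (Fin N) ℤ_[p])ᵐᵒᵖ | q.1 * q.2.unop = 1 ∧ q.2.unop * q.1 = 1}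
        = (fun q : (Matrix (Fin N) (Fin N) ℤ_[p]) × (Matrix (Fin N) (Fin N) ℤ_[p])ᵐᵒᵖ => (q.1 * q.2.unop, q.2.unop * q.1)) ⁻¹'
            {((1 : Matrix (Fin N) (Fin N) ℤ_[p]), (1 : Matrix (Fin N) (Fin N) ℤ_[p]))} := by
      ext q
      simp [Prod.ext_iff]
    rw [hset]
    exact isClosed_singleton.preimage hcont
  haveI : CompactSpace (Matrix (Fin N) (Fin N) ℤ_[p])ˣ :=
    Topology.IsClosedEmbedding.compactSpace ⟨Units.isEmbedding_embedProduct, hclosed⟩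
  haveI : T2Space (Matrix (Fin N) (Fin N) ℤ_[p])ˣ := Units.isEmbedding_embedProduct.t2Space
  -- the coercion is a closed (hence measurable) embedding
  have hι : Topology.IsClosedEmbedding (Units.val : (Matrix (Fin N) (Fin N) ℤ_[p])ˣ → Matrix (Fin N) (Fin N) ℤ_[p]) :=
    Continuous.isClosedEmbedding Units.continuous_val Units.val_injective
  have hmeasι : MeasurableEmbedding (Units.val : (Matrix (Fin N) (Fin N) ℤ_[p])ˣ → Matrix (Fin N) (Fin N) ℤ_[p]) := hι.measurableEmbedding
  have hmι : Measurable (Units.val : (Matrix (Fin N) (Fin N) ℤ_[p])ˣ → Matrix (Fin N) (Fin N) ℤ_[p]) := hι.continuous.measurable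
  -- the matrix-building map
  set T : (ℕ → Fin N → ℤ_[p]) → Matrix (Fin N) (Fin N) ℤ_[p] :=
    (fun ws => Matrix.of fun i (c : Fin N) => ws (N - 1 - (c : ℕ)) i) with hTdef
  have hTcont : Continuous T :=
    continuous_matrix fun i c => (continuous_apply i).comp (continuous_apply (N - 1 - (c : ℕ)))
  have hmT : Measurable T := hTcont.measurable
  haveI : IsProbabilityMeasure (buildCols p N ν N) := HaarGLZp.buildCols_prob p N ν N le_rfl
  set μ : Measure (Matrix (Fin N) (Fin N) ℤ_[p]) := (buildCols p N ν N).map T with hμdef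
  haveI : IsProbabilityMeasure μ := Measure.isProbabilityMeasure_map hmT.aemeasurable
  have hrangeval : Set.range (Units.val : (Matrix (Fin N) (Fin N) ℤ_[p])ˣ → Matrix (Fin N) (Fin N) ℤ_[p]) = {A : Matrix (Fin N) (Fin N) ℤ_[p] | IsUnit A} := by
    ext A
    exact ⟨fun ⟨u, hu⟩ => ⟨u, hu⟩, fun ⟨u, hu⟩ => ⟨u, hu⟩⟩
  have hmeasrange : MeasurableSet (Set.range (Units.val : (Matrix (Fin N) (Fin N) ℤ_[p])ˣ → Matrix (Fin N) (Fin N) ℤ_[p])) :=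
    hι.isClosed_range.measurableSet
  have hμrange : μ (Set.range (Units.val : (Matrix (Fin N) (Fin N) ℤ_[p])ˣ → Matrix (Fin N) (Fin N) ℤ_[p])) = 1 := by
    rw [hμdef, Measure.map_apply hmT hmeasrange]
    refine le_antisymm prob_le_one ?_
    calc (1 : ENNReal) = buildCols p N ν N (HaarGLZp.Eset p N N) :=
          (HaarGLZp.buildCols_Eset p N ν N le_rfl).symm
      _ ≤ _ := by
          apply measure_mono
          intro ws hws
          simp only [Set.mem_preimage, hrangeval, Set.mem_setOf_eq]
          exact HaarGLZp.isUnit_of_Eset p N hws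
  -- left invariance of μ
  have hinv : ∀ gu : (Matrix (Fin N) (Fin N) ℤ_[p])ˣ, μ.map (fun A => (gu : Matrix (Fin N) (Fin N) ℤ_[p]) * A) = μ := by
    intro gu
    have hvm : Measurable (fun ws : ℕ → Fin N → ℤ_[p] => fun j => ((gu : Matrix (Fin N) (Fin N) ℤ_[p])).mulVec (ws j)) :=
      measurable_pi_iff.2 fun j => (HaarGLZp.measurable_mulVec p N _).comp (measurable_pi_apply j)
    rw [hμdef, Measure.map_map (continuous_mul_left ((gu : Matrix (Fin N) (Fin N) ℤ_[p]))).measurable hmT]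
    have hcomp : (fun A : Matrix (Fin N) (Fin N) ℤ_[p] => (gu : Matrix (Fin N) (Fin N) ℤ_[p]) * A) ∘ T
        = T ∘ (fun ws j => ((gu : Matrix (Fin N) (Fin N) ℤ_[p])).mulVec (ws j)) := by
      funext ws
      ext i c
      simp [hTdef, Matrix.mul_apply, Matrix.mulVec, dotProduct, Matrix.of_apply]
    rw [hcomp, ← Measure.map_map hmT hvm,
      HaarGLZp.buildCols_map_mulVec p N ν ((gu : Matrix (Fin N) (Fin N) ℤ_[p])) gu.isUnit N le_rfl]
  set μ' : Measure (Matrix (Fin N) (Fin N) ℤ_[p])ˣ := μ.comap Units.val with hμ'def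
  haveI : IsProbabilityMeasure μ' := by
    constructor
    rw [hμ'def, hmeasι.comap_apply, Set.image_univ, hμrange]
  have hmapμ' : μ'.map Units.val = μ := by
    rw [hμ'def, hmeasι.map_comap]
    refine Measure.restrict_eq_self_of_ae_mem ?_
    rw [ae_iff]
    have hc : {x : Matrix (Fin N) (Fin N) ℤ_[p] | x ∉ Set.range (Units.val : (Matrix (Fin N) (Fin N) ℤ_[p])ˣ → Matrix (Fin N) (Fin N) ℤ_[p])}
        = (Set.range (Units.val : (Matrix (Fin N) (Fin N) ℤ_[p])ˣ → Matrix (Fin N) (Fin N) ℤ_[p]))ᶜ := rfl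
    rw [hc, prob_compl_eq_zero_iff hmeasrange]
    exact hμrange
  haveI : μ'.IsMulLeftInvariant := by
    constructor
    intro gu
    have hmg : Measurable (fun x : (Matrix (Fin N) (Fin N) ℤ_[p])ˣ => gu * x) := (continuous_mul_left gu).measurable
    have h2 : (μ'.map (gu * ·)).map Units.val = μ := by
      rw [Measure.map_map hmι hmg]
      have hcmp : (Units.val : (Matrix (Fin N) (Fin N) ℤ_[p])ˣ → Matrix (Fin N) (Fin N) ℤ_[p]) ∘ (fun x => gu * x)
          = (fun A : Matrix (Fin N) (Fin N) ℤ_[p] => (gu : Matrix (Fin N) (Fin N) ℤ_[p]) * A) ∘ Units.val := by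
        funext x
        simp
      rw [hcmp, ← Measure.map_map (continuous_mul_left ((gu : Matrix (Fin N) (Fin N) ℤ_[p]))).measurable hmι,
        hmapμ', hinv gu]
    calc μ'.map (gu * ·)
        = ((μ'.map (gu * ·)).map Units.val).comap Units.val := (hmeasι.comap_map _).symm
      _ = μ.comap Units.val := by rw [h2]
      _ = μ' := rfl
  have huniq : μ' = μH := HaarGLZp.mulHaar_unique μ' μH
  have hfinal : μH.map (fun U : (Matrix (Fin N) (Fin N) ℤ_[p])ˣ => (U : Matrix (Fin N) (Fin N) ℤ_[p])) = μ := by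
    rw [← huniq]
    exact hmapμ'
  rw [hfinal, hμdef]
end
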